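/- Let M be a minimal DFA and k ∈ ℕ, and let N be any DFA obtained from M by a (possibly empty) sequence of merge steps, where each step merges a surviving state q into a distinct surviving state p such that q and p are k-similar as states of the original DFA M and in-level_M(q) ≤ in-level_M(p). Then for every surviving state p' of N, d(L_M(p'), L_N(p')) ≤ max(0, k − in-level_M(p')). -/

import Mathlib

/-- The distance `d(L, L')` between two languages: the least `ℓ ∈ ℕ` such that
`L` and `L'` agree on all words of length at least `ℓ` (with `min ∅ = ∞`). -/
noncomputable def langDist {α : Type} (L L' : Set (List α)) : ℕ∞ :=
  sInf {n : ℕ∞ | ∃ ℓ : ℕ, n = (ℓ : ℕ∞) ∧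
    ∀ w : List α, ℓ ≤ w.length → (w ∈ L ↔ w ∈ L')}

/-- A deterministic finite automaton with a partial transition function. -/
structure PDFA (α σ : Type) where
  step : σ → α → Option σ
  start : σ
  accept : Set σ

namespace PDFA

variable {α σ : Type}

/-- Running the partial DFA from state `q` on the word `w`. -/
def evalFrom (M : PDFA α σ) (q : σ) (w : List α) : Option σ :=
  w.foldl (fun o a => o.bind fun r => M.step r a) (some q)

/-- Running the partial DFA from the start state. -/
def eval (M : PDFA α σ) (w : List α) : Option σ :=
  M.evalFrom M.start w

/-- The right-language `L_M(q)` of the state `q`. -/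
def rightLang (M : PDFA α σ) (q : σ) : Set (List α) :=
  {w | ∃ p ∈ M.accept, M.evalFrom q w = some p}

/-- The language recognised by the partial DFA. -/
def accepts (M : PDFA α σ) : Set (List α) :=
  {w | ∃ p ∈ M.accept, M.eval w = some p}

/-- The left-language `δ⁻¹(q)` of the state `q`: all words leading to `q`. -/
def leftLang (M : PDFA α σ) (q : σ) : Set (List α) :=
  {w | M.eval w = some q}

/-- `in-level_M(q)`: the supremum of the lengths of words leading to `q`. -/
noncomputable def inLevel (M : PDFA α σ) (q : σ) : ℕ∞ :=
  ⨆ w ∈ M.leftLang q, (w.length : ℕ∞)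

/-- A DFA is minimal if all states are reachable and have pairwise
distinct right-languages. -/
def IsMinimal (M : PDFA α σ) : Prop :=
  (∀ q : σ, ∃ w : List α, M.eval w = some q) ∧
  ∀ q p : σ, M.rightLang q = M.rightLang p → q = p

end PDFA

/-- The distance between a state of `M` and a state of `N`. -/
noncomputable def stateDist {α σ τ : Type} (M : PDFA α σ) (N : PDFA α τ)
    (q : σ) (p : τ) : ℕ∞ :=
  langDist (M.rightLang q) (N.rightLang p)

/-- Two states `q` of `M` and `p` of `N` are `k`-similar if
`d(q, p) + min(k, in-level_M(q), in-level_N(p)) ≤ k`. -/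
def kSimSt {α σ τ : Type} (M : PDFA α σ) (N : PDFA α τ) (k : ℕ) (q : σ) (p : τ) : Prop :=
  stateDist M N q p + min (k : ℕ∞) (min (M.inLevel q) (N.inLevel p)) ≤ (k : ℕ∞)

/-- Two DFAs are `k`-similar if their languages differ only on words of length `< k`. -/
def kSimDFA {α σ τ : Type} (M : PDFA α σ) (N : PDFA α τ) (k : ℕ) : Prop :=
  ∀ w ∈ symmDiff M.accepts N.accepts, w.length < k

/-- Merging state `q` into state `p`: every transition ending in `q` is redirected
to end in `p`, the start state becomes `p` if it was `q`, and `q` is deleted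
(removed from the accepting states; it becomes unreachable). -/
def PDFA.merge {α σ : Type} [DecidableEq σ] (M : PDFA α σ) (q p : σ) : PDFA α σ where
  step r a := (M.step r a).map fun x => if x = q then p else x
  start := if M.start = q then p else M.start
  accept := M.accept \ {q}

/-- `MergeSeq M k N S` holds if the DFA `N` with surviving state set `S` is obtained
from `M` by a (possibly empty) sequence of merge steps, each merging a surviving
state `q` into a distinct surviving state `p` such that `q ∼_k p` as states of the
original DFA `M` and `in-level_M(q) ≤ in-level_M(p)`. -/
inductive MergeSeq {α σ : Type} [DecidableEq σ] (M : PDFA α σ) (k : ℕ) :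
    PDFA α σ → Set σ → Prop where
  | refl : MergeSeq M k M Set.univ
  | step {N : PDFA α σ} {S : Set σ} {q p : σ} :
      MergeSeq M k N S → q ∈ S → p ∈ S → q ≠ p →
      kSimSt M M k q p → M.inLevel q ≤ M.inLevel p →
      MergeSeq M k (N.merge q p) (S \ {q})


/-! ### Auxiliary lemmas -/

theorem langDist_le_iff' {α : Type} {L L' : Set (List α)} (n : ℕ) :
    langDist L L' ≤ (n : ℕ∞) ↔ ∀ w : List α, n ≤ w.length → (w ∈ L ↔ w ∈ L') := by
  constructor
  · intro h w hw
    have h2 : langDist L L' < (n : ℕ∞) + 1 := by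
      refine lt_of_le_of_lt h ?_
      exact_mod_cast Nat.lt_succ_self n
    obtain ⟨m, hm, hlt⟩ := sInf_lt_iff.mp h2
    obtain ⟨ℓ, rfl, hagree⟩ := hm
    have hln : ℓ ≤ n := by
      have h3 : (ℓ : ℕ∞) < ((n + 1 : ℕ) : ℕ∞) := by push_cast; exact hlt
      exact Nat.lt_succ_iff.mp (by exact_mod_cast h3)
    exact hagree w (le_trans hln hw)
  · intro h
    exact sInf_le ⟨n, rfl, h⟩

namespace PDFA
variable {α σ : Type}

theorem foldl_none' (M : PDFA α σ) (w : List α) :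
    w.foldl (fun o a => o.bind fun r => M.step r a) none = none := by
  induction w with
  | nil => rfl
  | cons a v ih => simpa using ih

theorem evalFrom_cons (M : PDFA α σ) (s : σ) (a : α) (v : List α) :
    M.evalFrom s (a :: v) = (M.step s a).bind fun r => M.evalFrom r v := by
  cases h : M.step s a with
  | none => simp [evalFrom, h, foldl_none']
  | some r => simp [evalFrom, h]

theorem evalFrom_append (M : PDFA α σ) (q : σ) (u v : List α) :
    M.evalFrom q (u ++ v) = (M.evalFrom q u).bind fun r => M.evalFrom r v := by
  cases h : M.evalFrom q u with
  | none => simp [evalFrom, List.foldl_append] at h ⊢; simp [h, foldl_none']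
  | some r => simp [evalFrom, List.foldl_append] at h ⊢; simp [h]

theorem mem_rightLang_nil (M : PDFA α σ) (s : σ) :
    [] ∈ M.rightLang s ↔ s ∈ M.accept := by
  constructor
  · rintro ⟨p, hp, he⟩
    cases he; exact hp
  · intro h; exact ⟨s, h, rfl⟩

theorem mem_rightLang_cons (M : PDFA α σ) {s r : σ} {a : α} (h : M.step s a = some r)
    (v : List α) : (a :: v) ∈ M.rightLang s ↔ v ∈ M.rightLang r := by
  simp [rightLang, evalFrom_cons, h]

theorem not_mem_rightLang_cons (M : PDFA α σ) {s : σ} {a : α} (h : M.step s a = none)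
    (v : List α) : (a :: v) ∉ M.rightLang s := by
  simp [rightLang, evalFrom_cons, h]

theorem inLevel_step (M : PDFA α σ) {s r : σ} {a : α}
    (hreach : ∃ u, M.eval u = some s) (h : M.step s a = some r) :
    M.inLevel s + 1 ≤ M.inLevel r := by
  have hmem : ∀ u ∈ M.leftLang s, u ++ [a] ∈ M.leftLang r := by
    intro u hu
    simp only [leftLang, Set.mem_setOf_eq, eval] at hu ⊢
    rw [evalFrom_append, hu]
    simp [evalFrom_cons, evalFrom, h]
  have key : ∀ u ∈ M.leftLang s, (u.length : ℕ∞) + 1 ≤ M.inLevel r := by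
    intro u hu
    have h1 := le_iSup₂ (f := fun w (_ : w ∈ M.leftLang r) => (w.length : ℕ∞)) (u ++ [a])
      (hmem u hu)
    have h2 : ((u ++ [a]).length : ℕ∞) ≤ M.inLevel r := h1
    simpa using h2
  rcases eq_or_ne (M.inLevel r) ⊤ with ht | ht
  · simp [ht]
  · lift M.inLevel r to ℕ using ht with m hm
    obtain ⟨u0, hu0⟩ := hreach
    have hm1 : 1 ≤ m := by
      have h1 := key u0 hu0
      have h2 : (1 : ℕ∞) ≤ (m : ℕ∞) := le_trans (by simp) h1
      exact_mod_cast h2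
    have hsle : M.inLevel s ≤ ((m - 1 : ℕ) : ℕ∞) := by
      apply iSup₂_le
      intro u hu
      have h1 := key u hu
      have h2 : (u.length + 1 : ℕ) ≤ m := by exact_mod_cast h1
      exact_mod_cast Nat.le_sub_one_of_lt h2
    calc M.inLevel s + 1 ≤ ((m - 1 : ℕ) : ℕ∞) + 1 := add_le_add_left hsle 1
      _ = (m : ℕ∞) := by norm_cast; omega

end PDFA

/-- Threshold monotonicity in the in-level. -/
theorem thr_mono {k : ℕ} {L L' n : ℕ∞} (h : L ≤ L')
    (hthr : (k : ℕ∞) ≤ n + min (k : ℕ∞) L) : (k : ℕ∞) ≤ n + min (k : ℕ∞) L' :=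
  le_trans hthr (add_le_add_right (min_le_min_left _ h) n)

/-- Threshold decrease along a transition. -/
theorem thr_step {k : ℕ} {Ls Lr : ℕ∞} {n : ℕ∞} (hstep : Ls + 1 ≤ Lr)
    (hthr : (k : ℕ∞) ≤ (n + 1) + min (k : ℕ∞) Ls) :
    (k : ℕ∞) ≤ n + min (k : ℕ∞) Lr := by
  rcases le_total (k : ℕ∞) Lr with hc | hc
  · rw [min_eq_left hc]; exact le_add_self
  · rw [min_eq_right hc]
    have hLs : Ls ≤ (k : ℕ∞) := le_trans (le_trans le_self_add hstep) hc
    rw [min_eq_right hLs] at hthr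
    calc (k : ℕ∞) ≤ (n + 1) + Ls := hthr
      _ = n + (Ls + 1) := by ring
      _ ≤ n + Lr := add_le_add_right hstep n

/-- The invariants maintained along a merge sequence. -/
theorem mergeSeq_invariant {α σ : Type} [DecidableEq σ] (M : PDFA α σ) (hM : M.IsMinimal)
    (k : ℕ) {N : PDFA α σ} {S : Set σ} (hseq : MergeSeq M k N S) :
    (∀ s a r, N.step s a = some r → r ∈ S) ∧
    (N.accept = M.accept ∩ S) ∧
    (∀ s a r, N.step s a = some r → M.inLevel s + 1 ≤ M.inLevel r) ∧
    (∀ s ∈ S, ∀ w : List α, (k : ℕ∞) ≤ w.length + min (k : ℕ∞) (M.inLevel s) →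
      (w ∈ M.rightLang s ↔ w ∈ N.rightLang s)) := by
  induction hseq with
  | refl =>
    refine ⟨fun s a r _ => Set.mem_univ r, (Set.inter_univ _).symm,
      fun s a r h => M.inLevel_step (hM.1 s) h, fun s _ w _ => Iff.rfl⟩
  | @step N S q p hseq' hq hp hqp hsim hlev ih =>
    obtain ⟨A, B, D, C⟩ := ih
    have hstep_merge : ∀ s a, (N.merge q p).step s a
        = (N.step s a).map fun x => if x = q then p else x := fun _ _ => rfl
    have A' : ∀ s a r, (N.merge q p).step s a = some r → r ∈ S \ {q} := by
      intro s a r h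
      rw [hstep_merge, Option.map_eq_some_iff] at h
      obtain ⟨x, hx, hxr⟩ := h
      by_cases hxq : x = q
      · simp only [hxq, if_pos rfl] at hxr
        exact ⟨hxr ▸ hp, hxr ▸ (Ne.symm hqp)⟩
      · simp only [if_neg hxq] at hxr
        exact ⟨hxr ▸ A s a x hx, hxr ▸ hxq⟩
    have D' : ∀ s a r, (N.merge q p).step s a = some r → M.inLevel s + 1 ≤ M.inLevel r := by
      intro s a r h
      rw [hstep_merge, Option.map_eq_some_iff] at h
      obtain ⟨x, hx, hxr⟩ := h
      by_cases hxq : x = q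
      · simp only [hxq, if_pos rfl] at hxr
        exact hxr ▸ le_trans (D s a q (hxq ▸ hx)) hlev
      · simp only [if_neg hxq] at hxr
        exact hxr ▸ D s a x hx
    have B' : (N.merge q p).accept = M.accept ∩ (S \ {q}) := by
      show N.accept \ {q} = M.accept ∩ (S \ {q})
      rw [B]
      ext x
      simp only [Set.mem_diff, Set.mem_inter_iff, Set.mem_singleton_iff]
      tauto
    refine ⟨A', B', D', ?_⟩
    intro s hs w
    induction w generalizing s hs with
    | nil =>
      intro _
      rw [M.mem_rightLang_nil, (N.merge q p).mem_rightLang_nil]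
      show s ∈ M.accept ↔ s ∈ (N.merge q p).accept
      rw [B']
      obtain ⟨hs1, hs2⟩ := hs
      simp only [Set.mem_singleton_iff] at hs2
      simp only [Set.mem_inter_iff, Set.mem_diff, Set.mem_singleton_iff]
      tauto
    | cons a v ihv =>
      intro hthr
      have hthr' : (k : ℕ∞) ≤ ((v.length : ℕ∞) + 1) + min (k : ℕ∞) (M.inLevel s) := by
        have hl : ((a :: v).length : ℕ∞) = (v.length : ℕ∞) + 1 := by
          push_cast [List.length_cons]; ring
        rwa [hl] at hthr
      have h1 : (a :: v) ∈ M.rightLang s ↔ (a :: v) ∈ N.rightLang s :=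
        C s hs.1 (a :: v) hthr
      cases hstepN : N.step s a with
      | none =>
        have hn' : (N.merge q p).step s a = none := by
          rw [hstep_merge, hstepN]; rfl
        rw [h1]
        exact iff_of_false (N.not_mem_rightLang_cons hstepN v)
          ((N.merge q p).not_mem_rightLang_cons hn' v)
      | some r =>
        by_cases hrq : r = q
        · rw [hrq] at hstepN
          have hm' : (N.merge q p).step s a = some p := by
            rw [hstep_merge, hstepN]; simp
          have hDq : M.inLevel s + 1 ≤ M.inLevel q := D s a q hstepN
          have hthr_q : (k : ℕ∞) ≤ (v.length : ℕ∞) + min (k : ℕ∞) (M.inLevel q) :=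
            thr_step hDq hthr'
          have hthr_p : (k : ℕ∞) ≤ (v.length : ℕ∞) + min (k : ℕ∞) (M.inLevel p) :=
            thr_mono hlev hthr_q
          rw [h1, N.mem_rightLang_cons hstepN v,
            (N.merge q p).mem_rightLang_cons hm' v,
            ← C q hq v hthr_q]
          have hsim' : v ∈ M.rightLang q ↔ v ∈ M.rightLang p := by
            have hks := hsim
            unfold kSimSt stateDist at hks
            rw [min_eq_left hlev] at hks
            have hmin_ne : min (k : ℕ∞) (M.inLevel q) ≠ ⊤ :=
              ne_top_of_le_ne_top (ENat.coe_ne_top k) (min_le_left _ _)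
            have hd1 : langDist (M.rightLang q) (M.rightLang p)
                + min (k : ℕ∞) (M.inLevel q)
                ≤ (v.length : ℕ∞) + min (k : ℕ∞) (M.inLevel q) := le_trans hks hthr_q
            have hd2 := (WithTop.add_le_add_iff_right hmin_ne).mp hd1
            exact (langDist_le_iff' v.length).mp hd2 v le_rfl
          rw [hsim']
          exact ihv p ⟨hp, Ne.symm hqp⟩ hthr_p
        · have hr : r ∈ S := A s a r hstepN
          have hm' : (N.merge q p).step s a = some r := by
            rw [hstep_merge, hstepN]; simp [hrq]
          have hDr : M.inLevel s + 1 ≤ M.inLevel r := D s a r hstepN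
          have hthr_r : (k : ℕ∞) ≤ (v.length : ℕ∞) + min (k : ℕ∞) (M.inLevel r) :=
            thr_step hDr hthr'
          rw [h1, N.mem_rightLang_cons hstepN v,
            (N.merge q p).mem_rightLang_cons hm' v, ← C r hr v hthr_r]
          exact ihv r ⟨hr, hrq⟩ hthr_r

/-- During merging, the right-language of each surviving state stays close to its
original right-language: if `N` (with surviving states `S`) is obtained from the
minimal DFA `M` by merge steps, then for every `p' ∈ S`,
`d(L_M(p'), L_N(p')) ≤ max(0, k − in-level_M(p'))`. -/
theorem merge_preserves_distance {α σ : Type} [Fintype α] [Fintype σ] [DecidableEq σ]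
    (M : PDFA α σ) (hM : M.IsMinimal) (k : ℕ)
    (N : PDFA α σ) (S : Set σ) (hseq : MergeSeq M k N S) :
    ∀ p' ∈ S, langDist (M.rightLang p') (N.rightLang p')
      ≤ max 0 ((k : ℕ∞) - M.inLevel p') := by
  intro p' hp'
  obtain ⟨A, B, D, C⟩ := mergeSeq_invariant M hM k hseq
  rcases le_total (k : ℕ∞) (M.inLevel p') with hk | hk
  · have h0 : langDist (M.rightLang p') (N.rightLang p') ≤ ((0 : ℕ) : ℕ∞) := by
      rw [langDist_le_iff']
      intro w _
      exact C p' hp' w (by rw [min_eq_left hk]; exact le_add_self)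
    exact le_trans (by simpa using h0) (le_max_left _ _)
  · have hne : M.inLevel p' ≠ ⊤ := by
      intro h
      rw [h] at hk
      exact (ENat.coe_ne_top k) (top_le_iff.mp hk)
    lift M.inLevel p' to ℕ using hne with m hm
    have hmk : m ≤ k := by exact_mod_cast hk
    have h0 : langDist (M.rightLang p') (N.rightLang p') ≤ ((k - m : ℕ) : ℕ∞) := by
      rw [langDist_le_iff']
      intro w hw
      refine C p' hp' w ?_
      rw [← hm, min_eq_right (show (m : ℕ∞) ≤ (k : ℕ∞) by exact_mod_cast hmk)]
      exact_mod_cast (show (k : ℕ) ≤ w.length + m by omega)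
    refine le_trans h0 (le_trans ?_ (le_max_right _ _))
    rw [ENat.coe_sub]
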